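/- Let Q : W → W be any ℝ-linear map with Q(W̃) ⊆ W̃ and T(Q x) = x for every x ∈ W̃, and let S : W → W be any ℝ-linear map satisfying S x − x ∈ W̃ for every x ∈ W, S x = 0 for every x ∈ W̃, and T(S x) = 0 for every x ∈ W. Then S x = x − Q(T x) for every x ∈ W. (Abstract form of Corollary 3.4 of the paper: the splitting operator equals id − Q∘(∂*_ρ∘𝒟).) -/
import Mathlib


open Polynomial

/-- If `T y = 0`, then `aeval T p y = (p.coeff 0) • y`. -/
lemma aeval_apply_of_ker {W : Type*} [AddCommGroup W] [Module ℝ W]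
    (T : Module.End ℝ W) (y : W) (hy : T y = 0) (p : ℝ[X]) :
    (aeval T p) y = (p.coeff 0) • y := by
  conv_lhs => rw [← Polynomial.divX_mul_X_add p]
  simp only [map_add, map_mul, aeval_X, aeval_C, LinearMap.add_apply, Module.End.mul_apply,
    Module.algebraMap_end_apply, hy, map_zero, zero_add]

/-- Abstract form of Corollary 3.4: the splitting operator equals `id − Q ∘ (∂*_ρ ∘ 𝒟)`. -/
theorem splitting_eq_id_sub_QT {W : Type*} [AddCommGroup W] [Module ℝ W]
    (Wtil Wbar : Submodule ℝ W) (hWW : Wtil ≤ Wbar)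
    (T : Module.End ℝ W) (hrange : LinearMap.range T ≤ Wtil)
    (N : ℕ) (F : ℕ → Submodule ℝ W)
    (hF0 : F 0 = Wtil) (hFN : F N = ⊥)
    (hdec : ∀ ℓ : ℕ, F (ℓ + 1) ≤ F ℓ)
    (hTF : ∀ ℓ : ℕ, ∀ x ∈ F ℓ, T x ∈ F ℓ)
    (j : ℕ → ℕ) (a : (ℓ : ℕ) → Fin (j ℓ) → ℝ)
    (ha0 : ∀ ℓ < N, ∀ r, a ℓ r ≠ 0)
    (hainj : ∀ ℓ < N, Function.Injective (a ℓ))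
    (hdiag : ∀ ℓ < N, ∀ x ∈ F ℓ,
      (aeval T (∏ r : Fin (j ℓ), (X - C (a ℓ r)))) x ∈ F (ℓ + 1))
    (Q : Module.End ℝ W)
    (hQ1 : ∀ x ∈ Wtil, Q x ∈ Wtil)
    (hQ2 : ∀ x ∈ Wtil, T (Q x) = x)
    (S : Module.End ℝ W)
    (hS1 : ∀ x : W, S x - x ∈ Wtil)
    (hS2 : ∀ x ∈ Wtil, S x = 0)
    (hS3 : ∀ x : W, T (S x) = 0) :
    ∀ x : W, S x = x - Q (T x) := by
  -- T is injective on Wtil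
  have hinj : ∀ y ∈ Wtil, T y = 0 → y = 0 := by
    intro y hyW hTy
    have key : ∀ ℓ, ℓ ≤ N → y ∈ F ℓ := by
      intro ℓ
      induction ℓ with
      | zero => intro _; rw [hF0]; exact hyW
      | succ n ih =>
        intro hn
        have hnN : n < N := Nat.lt_of_succ_le hn
        have hyn : y ∈ F n := ih (Nat.le_of_lt hnN)
        have hmem := hdiag n hnN y hyn
        rw [aeval_apply_of_ker T y hTy] at hmem
        have hc : ((∏ r : Fin (j n), (X - C (a n r)) : ℝ[X])).coeff 0 =
            ∏ r : Fin (j n), (-(a n r)) := by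
          rw [Polynomial.coeff_zero_eq_eval_zero, Polynomial.eval_prod]
          simp
        rw [hc] at hmem
        have hcne : (∏ r : Fin (j n), (-(a n r))) ≠ 0 := by
          apply Finset.prod_ne_zero_iff.mpr
          intro r _
          simpa using ha0 n hnN r
        have := (F (n + 1)).smul_mem (∏ r : Fin (j n), (-(a n r)))⁻¹ hmem
        rwa [inv_smul_smul₀ hcne] at this
    have := key N le_rfl
    rw [hFN] at this
    simpa using this
  intro x
  set y := S x - x + Q (T x) with hy
  have hyW : y ∈ Wtil := by
    apply Wtil.add_mem (hS1 x)
    exact hQ1 _ (hrange ⟨x, rfl⟩)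
  have hTy : T y = 0 := by
    rw [hy]
    rw [map_add, map_sub, hS3 x, hQ2 _ (hrange ⟨x, rfl⟩)]
    abel
  have := hinj y hyW hTy
  rw [hy] at this
  linear_combination (norm := abel) this
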